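/- Let T be a phylogenetic X-tree, e an edge of T of length l(e) inducing the split A|B with |A| ≤ |B|, |A| ≥ 2, and let i ∈ A, j ∈ B. Define S(δ_T) = ∑_{{a₁,a₂} ⊆ A} (Z_{δ_T}(a₁,a₂) - Z_{δ_T}(i,j)) with the scaled Z-criterion. Then the coefficient of l(e) in S(δ_T) is C(|A|,2)(|B|-1)(n-1), and the coefficient of l(e') is nonnegative for every other edge e' of T; consequently S(δ_T) ≥ C(|A|,2)(|B|-1)(n-1)·l(e). -/

import Mathlib

open Finset
open scoped Classical

/-- `w_δ(ij:kl) = (1/2)(δ(i,k)+δ(i,l)+δ(j,k)+δ(j,l)) - δ(i,j) - δ(k,l)`. -/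
noncomputable def njw {X : Type*} (δ : X → X → ℝ) (i j k l : X) : ℝ :=
  (δ i k + δ i l + δ j k + δ j l) / 2 - δ i j - δ k l

/-- Edge `e` (with split side `σ e`) separates the pair `p,q` from the pair `r,s`. -/
def sepE {X E : Type*} (σ : E → Finset X) (e : E) (p q r s : X) : Prop :=
  (p ∈ σ e ∧ q ∈ σ e ∧ r ∉ σ e ∧ s ∉ σ e) ∨
  (p ∉ σ e ∧ q ∉ σ e ∧ r ∈ σ e ∧ s ∈ σ e)

/-- `(ij:kl)` is a quartet of the tree encoded by the split system `σ`:
some internal edge separates `{i,j}` from `{k,l}`. -/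
def isQuartet {X E : Type*} (σ : E → Finset X) (i j k l : X) : Prop :=
  ∃ e, sepE σ e i j k l

/-- Pairwise compatibility of the splits: the condition under which a split system
is exactly the split system of a (phylogenetic) tree. -/
def splitsCompatible {X E : Type*} [Fintype X] (σ : E → Finset X) : Prop :=
  ∀ e f, σ e ⊆ σ f ∨ σ f ⊆ σ e ∨ (∀ a, a ∈ σ e → a ∉ σ f) ∨ (∀ a, a ∈ σ e ∨ a ∈ σ f)

/-- A dissimilarity map `δ` is quartet consistent with the tree encoded by `σ`. -/
def quartetConsistent {X E : Type*} (σ : E → Finset X) (δ : X → X → ℝ) : Prop :=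
  ∀ i j k l : X, i ≠ j → i ≠ k → i ≠ l → j ≠ k → j ≠ l → k ≠ l →
    isQuartet σ i j k l →
      njw δ i j k l > max (njw δ i k j l) (njw δ i l j k)

/-- The scaled Z-criterion `Z_δ(i,j) = ∑_{{k,l} ⊆ X\{i,j}} w_δ(ij:kl)`
(sum over unordered pairs, written as half the sum over ordered pairs). -/
noncomputable def njZ {X : Type*} [Fintype X] [DecidableEq X]
    (δ : X → X → ℝ) (i j : X) : ℝ :=
  (1 / 2) * ∑ k ∈ (Finset.univ.erase i).erase j,
    ∑ l ∈ ((Finset.univ.erase i).erase j).erase k, njw δ i j k l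

/-- `(x,y)` is a cherry of the tree encoded by `σ`: some edge induces the split
`{x,y} | X \ {x,y}`. -/
def isCherry {X E : Type*} [Fintype X] [DecidableEq X]
    (σ : E → Finset X) (x y : X) : Prop :=
  x ≠ y ∧ ∃ e, σ e = {x, y} ∨ σ e = ({x, y} : Finset X)ᶜ

/-- `S(δ) = ∑_{{a₁,a₂} ⊆ A} (Z_δ(a₁,a₂) - Z_δ(i,j))` with the scaled Z-criterion. -/
noncomputable def njS {X : Type*} [Fintype X] [DecidableEq X]
    (A : Finset X) (i j : X) (δ : X → X → ℝ) : ℝ :=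
  (1 / 2) * ∑ a₁ ∈ A, ∑ a₂ ∈ A.erase a₁, (njZ δ a₁ a₂ - njZ δ i j)

/-- The indicator dissimilarity map of the split of edge `e`. -/
noncomputable def splitInd {X E : Type*} [DecidableEq X]
    (σ : E → Finset X) (e : E) : X → X → ℝ :=
  fun x y => if (x ∈ σ e) ≠ (y ∈ σ e) then 1 else 0

/-- The indicator dissimilarity map of the split of edge `e`. -/
noncomputable def bf : Bool → Bool → ℝ := fun x y => if x = y then 0 else 1

noncomputable def Fq (sa sb x y : Bool) : ℝ :=
  (bf sa x + bf sa y + bf sb x + bf sb y)/2 - bf sa sb - bf x y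

noncomputable def zval (c m : ℝ) : Bool → Bool → ℝ := fun x y =>
  if x = true then (if y = true then m*(m-1) else -((c-1)*(m-1)))
  else (if y = true then -((c-1)*(m-1)) else c*(c-1))


lemma sum_split {X:Type*} [DecidableEq X] (T C : Finset X) (g : Bool → ℝ) :
    ∑ l ∈ T, g (decide (l ∈ C)) = (T ∩ C).card * g true + (T \ C).card * g false := by
  rw [← Finset.sum_filter_add_sum_filter_not T (· ∈ C)]
  rw [Finset.filter_mem_eq_inter]
  rw [show T.filter (fun x => ¬ x ∈ C) = T \ C by rw [Finset.sdiff_eq_filter]]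
  rw [Finset.sum_congr rfl (fun x hx => by simp at hx; simp [hx.2] : ∀ x ∈ T ∩ C, g (decide (x ∈ C)) = g true)]
  rw [Finset.sum_congr rfl (fun x hx => by simp at hx; simp [hx.2] : ∀ x ∈ T \ C, g (decide (x ∈ C)) = g false)]
  simp [mul_comm]

lemma double_split {X:Type*} [DecidableEq X] (T C : Finset X) (f : Bool → Bool → ℝ) :
    ∑ k ∈ T, ∑ l ∈ T.erase k, f (decide (k ∈ C)) (decide (l ∈ C)) =
      ((T ∩ C).card : ℝ) * (((T ∩ C).card : ℝ) - 1) * f true true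
      + ((T ∩ C).card : ℝ) * ((T \ C).card : ℝ) * (f true false + f false true)
      + ((T \ C).card : ℝ) * (((T \ C).card : ℝ) - 1) * f false false := by
  have h1 : ∀ k ∈ T, ∑ l ∈ T.erase k, f (decide (k ∈ C)) (decide (l ∈ C))
      = (fun x => ((T ∩ C).card : ℝ) * f x true + ((T \ C).card : ℝ) * f x false
          - f x x) (decide (k ∈ C)) := by
    intro k hk
    have := Finset.sum_erase_eq_sub (f := fun l => f (decide (k ∈ C)) (decide (l ∈ C))) hk
    rw [this, sum_split T C (fun y => f (decide (k ∈ C)) y)]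
  rw [Finset.sum_congr rfl h1, sum_split T C (fun x => ((T ∩ C).card : ℝ) * f x true + ((T \ C).card : ℝ) * f x false - f x x)]
  ring

lemma njZ_ind {X:Type*} [Fintype X] [DecidableEq X] (C : Finset X) (a b : X) (hab : a ≠ b) :
    njZ (fun x y => if (x ∈ C) ≠ (y ∈ C) then (1:ℝ) else 0) a b
      = zval C.card Cᶜ.card (decide (a ∈ C)) (decide (b ∈ C)) := by
  have key : ∀ x y : X, (if (x ∈ C) ≠ (y ∈ C) then (1:ℝ) else 0)
      = bf (decide (x ∈ C)) (decide (y ∈ C)) := by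
    intro x y; by_cases hx : x ∈ C <;> by_cases hy : y ∈ C <;> simp [bf, hx, hy]
  set T := (Finset.univ.erase a).erase b with hT
  have hcong : ∀ k ∈ T, ∑ l ∈ T.erase k,
      njw (fun x y => if (x ∈ C) ≠ (y ∈ C) then (1:ℝ) else 0) a b k l
      = ∑ l ∈ T.erase k, Fq (decide (a ∈ C)) (decide (b ∈ C)) (decide (k ∈ C)) (decide (l ∈ C)) :=
    fun k _ => Finset.sum_congr rfl (fun l _ => by simp only [njw, key, Fq])
  rw [njZ, Finset.sum_congr rfl hcong,
    double_split T C (Fq (decide (a ∈ C)) (decide (b ∈ C)))]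
  by_cases ha : a ∈ C <;> by_cases hb : b ∈ C
  · -- both in C
    have hb' : b ∈ C.erase a := Finset.mem_erase.mpr ⟨hab.symm, hb⟩
    have h1 : T ∩ C = (C.erase a).erase b := by
      ext x; simp only [hT, Finset.mem_inter, Finset.mem_erase, Finset.mem_univ, and_true]; tauto
    have h2 : T \ C = Cᶜ := by
      ext x
      simp only [hT, Finset.mem_sdiff, Finset.mem_erase, Finset.mem_univ, and_true, Finset.mem_compl]
      aesop
    have k1 : ((T ∩ C).card : ℝ) = (C.card : ℝ) - 2 := by
      have e1 := Finset.card_erase_add_one hb'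
      have e2 := Finset.card_erase_add_one ha
      rw [h1]
      have : ((C.erase a).erase b).card + 2 = C.card := by omega
      have := congrArg (Nat.cast (R := ℝ)) this
      push_cast at this; linarith
    have k2 : ((T \ C).card : ℝ) = (Cᶜ.card : ℝ) := by rw [h2]
    rw [k1, k2]
    simp [ha, hb, Fq, bf, zval]
    ring
  · -- a in, b out
    have h1 : T ∩ C = C.erase a := by
      ext x
      simp only [hT, Finset.mem_inter, Finset.mem_erase, Finset.mem_univ, and_true]
      aesop
    have h2 : T \ C = Cᶜ.erase b := by
      ext x
      simp only [hT, Finset.mem_sdiff, Finset.mem_erase, Finset.mem_univ, and_true, Finset.mem_compl]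
      aesop
    have k1 : ((T ∩ C).card : ℝ) = (C.card : ℝ) - 1 := by
      have e2 := Finset.card_erase_add_one ha
      rw [h1]
      have : (C.erase a).card + 1 = C.card := e2
      have := congrArg (Nat.cast (R := ℝ)) this
      push_cast at this; linarith
    have k2 : ((T \ C).card : ℝ) = (Cᶜ.card : ℝ) - 1 := by
      have e2 := Finset.card_erase_add_one (Finset.mem_compl.mpr hb)
      rw [h2]
      have := congrArg (Nat.cast (R := ℝ)) e2
      push_cast at this; linarith
    rw [k1, k2]
    simp [ha, hb, Fq, bf, zval]
    ring
  · -- a out, b in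
    have h1 : T ∩ C = C.erase b := by
      ext x
      simp only [hT, Finset.mem_inter, Finset.mem_erase, Finset.mem_univ, and_true]
      aesop
    have h2 : T \ C = Cᶜ.erase a := by
      ext x
      simp only [hT, Finset.mem_sdiff, Finset.mem_erase, Finset.mem_univ, and_true, Finset.mem_compl]
      aesop
    have k1 : ((T ∩ C).card : ℝ) = (C.card : ℝ) - 1 := by
      have e2 := Finset.card_erase_add_one hb
      rw [h1]
      have := congrArg (Nat.cast (R := ℝ)) e2
      push_cast at this; linarith
    have k2 : ((T \ C).card : ℝ) = (Cᶜ.card : ℝ) - 1 := by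
      have e2 := Finset.card_erase_add_one (Finset.mem_compl.mpr ha)
      rw [h2]
      have := congrArg (Nat.cast (R := ℝ)) e2
      push_cast at this; linarith
    rw [k1, k2]
    simp [ha, hb, Fq, bf, zval]
    ring
  · -- both out
    have hb' : b ∈ Cᶜ.erase a := Finset.mem_erase.mpr ⟨hab.symm, Finset.mem_compl.mpr hb⟩
    have h1 : T ∩ C = C := by
      ext x
      simp only [hT, Finset.mem_inter, Finset.mem_erase, Finset.mem_univ, and_true]
      aesop
    have h2 : T \ C = (Cᶜ.erase a).erase b := by
      ext x
      simp only [hT, Finset.mem_sdiff, Finset.mem_erase, Finset.mem_univ, and_true, Finset.mem_compl]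
      tauto
    have k1 : ((T ∩ C).card : ℝ) = (C.card : ℝ) := by rw [h1]
    have k2 : ((T \ C).card : ℝ) = (Cᶜ.card : ℝ) - 2 := by
      have e1 := Finset.card_erase_add_one hb'
      have e2 := Finset.card_erase_add_one (Finset.mem_compl.mpr ha)
      rw [h2]
      have : ((Cᶜ.erase a).erase b).card + 2 = Cᶜ.card := by omega
      have := congrArg (Nat.cast (R := ℝ)) this
      push_cast at this; linarith
    rw [k1, k2]
    simp [ha, hb, Fq, bf, zval]
    ring


lemma njS_ind {X:Type*} [Fintype X] [DecidableEq X] (A C : Finset X) (i j : X)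
    (hi : i ∈ A) (hj : j ∉ A) :
    njS A i j (fun x y => if (x ∈ C) ≠ (y ∈ C) then (1:ℝ) else 0)
      = (1/2) * ( ((A ∩ C).card : ℝ) * (((A ∩ C).card : ℝ) - 1) * zval C.card Cᶜ.card true true
        + 2 * ((A ∩ C).card : ℝ) * ((A \ C).card : ℝ) * zval C.card Cᶜ.card true false
        + ((A \ C).card : ℝ) * (((A \ C).card : ℝ) - 1) * zval C.card Cᶜ.card false false
        - (A.card : ℝ) * ((A.card : ℝ) - 1) * zval C.card Cᶜ.card (decide (i ∈ C)) (decide (j ∈ C)) ) := by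
  have hij : i ≠ j := fun h => hj (h ▸ hi)
  have hcong : ∀ a₁ ∈ A, ∑ a₂ ∈ A.erase a₁,
      (njZ (fun x y => if (x ∈ C) ≠ (y ∈ C) then (1:ℝ) else 0) a₁ a₂
        - njZ (fun x y => if (x ∈ C) ≠ (y ∈ C) then (1:ℝ) else 0) i j)
      = ∑ a₂ ∈ A.erase a₁, (fun x y => zval C.card Cᶜ.card x y
          - zval C.card Cᶜ.card (decide (i ∈ C)) (decide (j ∈ C)))
            (decide (a₁ ∈ C)) (decide (a₂ ∈ C)) := by
    intro a₁ _
    refine Finset.sum_congr rfl (fun a₂ ha₂ => ?_)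
    have hne : a₁ ≠ a₂ := fun h => (Finset.mem_erase.mp ha₂).1 h.symm
    rw [njZ_ind C a₁ a₂ hne, njZ_ind C i j hij]
  rw [njS, Finset.sum_congr rfl hcong,
    double_split A C (fun x y => zval C.card Cᶜ.card x y
      - zval C.card Cᶜ.card (decide (i ∈ C)) (decide (j ∈ C)))]
  have hsum : ((A ∩ C).card : ℝ) + ((A \ C).card : ℝ) = (A.card : ℝ) := by
    exact_mod_cast congrArg (Nat.cast (R := ℝ)) (Finset.card_inter_add_card_sdiff A C)
  have hzsym : zval (C.card : ℝ) (Cᶜ.card : ℝ) false true = zval C.card Cᶜ.card true false := by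
    simp [zval]
  rw [← hsum, hzsym]
  ring

lemma nnq (n : ℕ) : (0:ℝ) ≤ (n:ℝ) * ((n:ℝ) - 1) := by
  rcases n with _|m
  · simp
  · push_cast
    nlinarith [Nat.cast_nonneg (α := ℝ) m]

set_option maxHeartbeats 1000000 in
lemma njS_ind_nonneg {X:Type*} [Fintype X] [DecidableEq X] (A C : Finset X) (i j : X)
    (hi : i ∈ A) (hj : j ∉ A) (hA2 : 2 ≤ A.card) (hAB : A.card ≤ Aᶜ.card)
    (hCne : C.Nonempty) (hCuniv : C ≠ Finset.univ)
    (hcomp : C ⊆ A ∨ A ⊆ C ∨ (∀ a, a ∈ C → a ∉ A) ∨ (∀ a, a ∈ C ∨ a ∈ A)) :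
    0 ≤ njS A i j (fun x y => if (x ∈ C) ≠ (y ∈ C) then (1:ℝ) else 0) := by
  rw [njS_ind A C i j hi hj]
  set K := ((A ∩ C).card : ℝ) with hKdef
  set D := ((A \ C).card : ℝ) with hDdef
  set c := ((C.card : ℕ) : ℝ) with hcdef
  set m := ((Cᶜ.card : ℕ) : ℝ) with hmdef
  set a := ((A.card : ℕ) : ℝ) with hadef
  have hkd : K + D = a := by
    rw [hKdef, hDdef, hadef]
    exact_mod_cast congrArg (Nat.cast (R := ℝ)) (Finset.card_inter_add_card_sdiff A C)
  have hc1 : (1:ℝ) ≤ c := by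
    rw [hcdef]; exact_mod_cast Finset.card_pos.mpr hCne
  have hm1 : (1:ℝ) ≤ m := by
    have : Cᶜ.Nonempty := by
      by_contra h
      rw [Finset.not_nonempty_iff_eq_empty, Finset.compl_eq_empty_iff] at h
      exact hCuniv h
    rw [hmdef]; exact_mod_cast Finset.card_pos.mpr this
  have h2a : 2 * a ≤ c + m := by
    rw [hadef, hcdef, hmdef]
    have h1 : (A.card : ℝ) ≤ (Aᶜ.card : ℝ) := by exact_mod_cast hAB
    have h2 : ((C.card : ℕ) : ℝ) + ((Cᶜ.card : ℕ) : ℝ) = (Fintype.card X : ℝ) := by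
      exact_mod_cast congrArg (Nat.cast (R := ℝ)) (Finset.card_add_card_compl C)
    have h3 : ((A.card : ℕ) : ℝ) + ((Aᶜ.card : ℕ) : ℝ) = (Fintype.card X : ℝ) := by
      exact_mod_cast congrArg (Nat.cast (R := ℝ)) (Finset.card_add_card_compl A)
    linarith
  have ha2 : (2:ℝ) ≤ a := by rw [hadef]; exact_mod_cast hA2
  have hK0 : (0:ℝ) ≤ K := Nat.cast_nonneg _
  have hD0 : (0:ℝ) ≤ D := Nat.cast_nonneg _
  have hc0 : (0:ℝ) ≤ c := by linarith
  have hm0 : (0:ℝ) ≤ m := by linarith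
  have hc1' : (0:ℝ) ≤ c - 1 := by linarith
  have hm1' : (0:ℝ) ≤ m - 1 := by linarith
  have hDD := nnq (A \ C).card
  have hKK := nnq (A ∩ C).card
  have haa := nnq A.card
  rw [← hDdef] at hDD
  rw [← hKdef] at hKK
  rw [← hadef] at haa
  rcases hcomp with hsub | hsub | hdis | hun
  · -- C ⊆ A
    have hK : K = c := by rw [hKdef, Finset.inter_eq_right.mpr hsub]
    have hjC : decide (j ∈ C) = false := by
      simp only [decide_eq_false_iff_not]; exact fun h => hj (hsub h)
    have ha' : a = c + D := by linarith
    by_cases hiC : i ∈ C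
    · have hiC' : decide (i ∈ C) = true := by simp [hiC]
      rw [hiC', hjC, hK, ha']
      simp only [zval, if_true, if_false, Bool.true_eq_false, Bool.false_eq_true]
      have h3 : (0:ℝ) ≤ m - 2*D - c := by linarith
      have t1 : (0:ℝ) ≤ (c-1) * (c * (m-1) * (m - 2*D - c + c)) :=
        mul_nonneg hc1' (mul_nonneg (mul_nonneg hc0 hm1') (by linarith))
      have t2 : (0:ℝ) ≤ (c-1) * (c * (D*(D-1))) :=
        mul_nonneg hc1' (mul_nonneg hc0 hDD)
      have t3 : (0:ℝ) ≤ (c-1) * ((c+D)*((c+D)-1)*(m-1)) := by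
        have : (0:ℝ) ≤ (c+D)*((c+D)-1) := by rw [← ha']; exact haa
        exact mul_nonneg hc1' (mul_nonneg this hm1')
      nlinarith [t1, t2, t3]
    · have hiC' : decide (i ∈ C) = false := by simp [hiC]
      rw [hiC', hjC, hK, ha']
      simp only [zval, if_true, if_false, Bool.true_eq_false, Bool.false_eq_true]
      have hcc : (0:ℝ) ≤ c * (c-1) := mul_nonneg hc0 hc1'
      have hX : (0:ℝ) ≤ ((m - D - (c+D)) * ((m - D) + (c+D) - 1)) := by
        have h1 : (0:ℝ) ≤ m - D - (c+D) := by linarith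
        have h2 : (0:ℝ) ≤ (m - D) + (c+D) - 1 := by linarith
        exact mul_nonneg h1 h2
      nlinarith [mul_nonneg hcc hX]
  · -- A ⊆ C
    have hK : K = a := by rw [hKdef, hadef, Finset.inter_eq_left.mpr hsub]
    have hD : D = 0 := by linarith
    have hiC' : decide (i ∈ C) = true := by simp [hsub hi]
    by_cases hjC : j ∈ C
    · have hjC' : decide (j ∈ C) = true := by simp [hjC]
      rw [hiC', hjC', hK, hD]
      simp only [zval, if_true]
      nlinarith []
    · have hjC' : decide (j ∈ C) = false := by simp [hjC]
      rw [hiC', hjC', hK, hD]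
      simp only [zval, if_true, if_false, Bool.true_eq_false, Bool.false_eq_true]
      have t1 : (0:ℝ) ≤ a*(a-1) * ((m-1) * (m + c - 1)) :=
        mul_nonneg haa (mul_nonneg hm1' (by linarith))
      nlinarith [t1]
  · -- disjoint
    have hK : K = 0 := by
      have h : A ∩ C = ∅ := by
        ext x; simp only [Finset.mem_inter, Finset.notMem_empty, iff_false]
        exact fun h => hdis x h.2 h.1
      rw [hKdef, h]; simp
    have hD : D = a := by linarith
    have hiC' : decide (i ∈ C) = false := by
      simp only [decide_eq_false_iff_not]; exact fun h => hdis i h hi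
    by_cases hjC : j ∈ C
    · have hjC' : decide (j ∈ C) = true := by simp [hjC]
      rw [hiC', hjC', hK, hD]
      simp only [zval, if_true, if_false, Bool.true_eq_false, Bool.false_eq_true]
      have t1 : (0:ℝ) ≤ a*(a-1) * ((c-1) * (c + m - 1)) :=
        mul_nonneg haa (mul_nonneg hc1' (by linarith))
      nlinarith [t1]
    · have hjC' : decide (j ∈ C) = false := by simp [hjC]
      rw [hiC', hjC', hK, hD]
      simp only [zval, if_true, if_false, Bool.true_eq_false, Bool.false_eq_true]
      nlinarith []
  · -- union is univ
    have hD : D = m := by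
      have h : A \ C = Cᶜ := by
        ext x
        simp only [Finset.mem_sdiff, Finset.mem_compl]
        exact ⟨fun h => h.2, fun h => ⟨(hun x).resolve_left h, h⟩⟩
      rw [hDdef, h]
    have ha' : a = K + m := by linarith
    have hjC' : decide (j ∈ C) = true := by simp [(hun j).resolve_right hj]
    by_cases hiC : i ∈ C
    · have hiC' : decide (i ∈ C) = true := by simp [hiC]
      rw [hiC', hjC', hD, ha']
      simp only [zval, if_true, if_false, Bool.true_eq_false, Bool.false_eq_true]
      have hmm : (0:ℝ) ≤ m * (m-1) := mul_nonneg hm0 hm1'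
      have hX : (0:ℝ) ≤ ((c - K - (K+m)) * ((c - K) + (K+m) - 1)) := by
        have h1 : (0:ℝ) ≤ c - K - (K+m) := by linarith
        have h2 : (0:ℝ) ≤ (c - K) + (K+m) - 1 := by linarith
        exact mul_nonneg h1 h2
      nlinarith [mul_nonneg hmm hX]
    · have hiC' : decide (i ∈ C) = false := by simp [hiC]
      rw [hiC', hjC', hD, ha']
      simp only [zval, if_true, if_false, Bool.true_eq_false, Bool.false_eq_true]
      have h3 : (0:ℝ) ≤ c - 2*K - m := by linarith
      have t1 : (0:ℝ) ≤ (m-1) * (m * (c-1) * (c - 2*K - m + m)) :=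
        mul_nonneg hm1' (mul_nonneg (mul_nonneg hm0 hc1') (by linarith))
      have t2 : (0:ℝ) ≤ (m-1) * (m * (K*(K-1))) :=
        mul_nonneg hm1' (mul_nonneg hm0 hKK)
      have t3 : (0:ℝ) ≤ (m-1) * ((K+m)*((K+m)-1)*(c-1)) := by
        have : (0:ℝ) ≤ (K+m)*((K+m)-1) := by rw [← ha']; exact haa
        exact mul_nonneg hm1' (mul_nonneg this hc1')
      nlinarith [t1, t2, t3]

lemma njS_linear {X E : Type*} [Fintype X] [DecidableEq X] [Fintype E]
    (A : Finset X) (i j : X) (w : E → ℝ) (g : E → X → X → ℝ) (δ : X → X → ℝ)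
    (hδ : ∀ x y, δ x y = ∑ e, w e * g e x y) :
    njS A i j δ = ∑ e, w e * njS A i j (g e) := by
  have hw : ∀ p q k l : X, njw δ p q k l = ∑ e, w e * njw (g e) p q k l := by
    intro p q k l
    simp only [njw, hδ, ← Finset.sum_add_distrib, ← Finset.sum_sub_distrib,
      Finset.sum_div]
    exact Finset.sum_congr rfl fun e _ => by ring
  have hZ : ∀ p q : X, njZ δ p q = ∑ e, w e * njZ (g e) p q := by
    intro p q
    simp only [njZ, hw]
    rw [Finset.sum_congr rfl (fun k _ => Finset.sum_comm), Finset.sum_comm,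
      Finset.mul_sum]
    refine Finset.sum_congr rfl fun e _ => ?_
    rw [show ∑ k ∈ (Finset.univ.erase p).erase q,
        ∑ l ∈ ((Finset.univ.erase p).erase q).erase k, w e * njw (g e) p q k l
      = w e * ∑ k ∈ (Finset.univ.erase p).erase q,
        ∑ l ∈ ((Finset.univ.erase p).erase q).erase k, njw (g e) p q k l by
      simp only [Finset.mul_sum]]
    ring
  simp only [njS, hZ]
  rw [show ∑ a₁ ∈ A, ∑ a₂ ∈ A.erase a₁,
      ((∑ e, w e * njZ (g e) a₁ a₂) - ∑ e, w e * njZ (g e) i j)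
    = ∑ a₁ ∈ A, ∑ a₂ ∈ A.erase a₁,
      ∑ e, (w e * njZ (g e) a₁ a₂ - w e * njZ (g e) i j) by
    simp only [Finset.sum_sub_distrib]]
  rw [Finset.sum_congr rfl (fun k _ => Finset.sum_comm), Finset.sum_comm,
    Finset.mul_sum]
  refine Finset.sum_congr rfl fun e _ => ?_
  rw [show ∑ a₁ ∈ A, ∑ a₂ ∈ A.erase a₁,
      (w e * njZ (g e) a₁ a₂ - w e * njZ (g e) i j)
    = w e * ∑ a₁ ∈ A, ∑ a₂ ∈ A.erase a₁, (njZ (g e) a₁ a₂ - njZ (g e) i j) by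
    simp only [Finset.mul_sum, mul_sub]]
  ring

/-- for a tree with an edge `e₀` inducing the split `A|B`
(`B = Aᶜ`, `2 ≤ |A| ≤ |B|`), `i ∈ A`, `j ∈ B`: writing `S(δ_T)` as a linear function of
the edge lengths, the coefficient of `l(e₀)` is `C(|A|,2)(|B|-1)(n-1)`, the coefficient
of `l(e')` is nonnegative for every other edge `e'`, and consequently
`S(δ_T) ≥ C(|A|,2)(|B|-1)(n-1)·l(e₀)`. -/
theorem statement_15 {X E : Type*} [Fintype X] [DecidableEq X] [Fintype E]
    (σ : E → Finset X) (le : E → ℝ) (hle : ∀ e, 0 < le e)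
    (hcompat : splitsCompatible σ)
    (hnontriv : ∀ e, (σ e).Nonempty ∧ σ e ≠ Finset.univ)
    (δT : X → X → ℝ)
    (hδT : ∀ x y, δT x y = ∑ e, if (x ∈ σ e) ≠ (y ∈ σ e) then le e else 0)
    (A : Finset X) (e₀ : E) (he₀ : σ e₀ = A)
    (hA2 : 2 ≤ A.card) (hAB : A.card ≤ Aᶜ.card)
    (i j : X) (hi : i ∈ A) (hj : j ∉ A) :
    njS A i j (splitInd σ e₀) =
        (A.card.choose 2 : ℝ) * ((Aᶜ.card : ℝ) - 1) * ((Fintype.card X : ℝ) - 1) ∧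
    (∀ e, e ≠ e₀ → 0 ≤ njS A i j (splitInd σ e)) ∧
    njS A i j δT ≥
        (A.card.choose 2 : ℝ) * ((Aᶜ.card : ℝ) - 1) * ((Fintype.card X : ℝ) - 1)
          * le e₀ := by
  -- auxiliary facts
  have hij : i ≠ j := fun h => hj (h ▸ hi)
  have hindA : splitInd σ e₀ = (fun x y => if (x ∈ A) ≠ (y ∈ A) then (1:ℝ) else 0) := by
    funext x y; simp only [splitInd, he₀]
  have hA_ne_univ : A ≠ Finset.univ := fun h => hj (h ▸ Finset.mem_univ j)
  have hm1 : (1:ℝ) ≤ (Aᶜ.card : ℝ) := by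
    have : Aᶜ.Nonempty := ⟨j, Finset.mem_compl.mpr hj⟩
    exact_mod_cast Finset.card_pos.mpr this
  have hn : (A.card : ℝ) + (Aᶜ.card : ℝ) = (Fintype.card X : ℝ) := by
    exact_mod_cast congrArg (Nat.cast (R := ℝ)) (Finset.card_add_card_compl A)
  have ha2 : (2:ℝ) ≤ (A.card : ℝ) := by exact_mod_cast hA2
  -- Part 1
  have P1 : njS A i j (splitInd σ e₀) =
      (A.card.choose 2 : ℝ) * ((Aᶜ.card : ℝ) - 1) * ((Fintype.card X : ℝ) - 1) := by
    rw [hindA, njS_ind A A i j hi hj]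
    have hK : ((A ∩ A).card : ℝ) = (A.card : ℝ) := by rw [Finset.inter_self]
    have hD : ((A \ A).card : ℝ) = 0 := by rw [Finset.sdiff_self]; simp
    have hiA : decide (i ∈ A) = true := by simp [hi]
    have hjA : decide (j ∈ A) = false := by simp [hj]
    rw [hK, hD, hiA, hjA, Nat.cast_choose_two, ← hn]
    simp only [zval, if_true, if_false, Bool.true_eq_false, Bool.false_eq_true]
    ring
  -- Part 2
  have P2 : ∀ e, e ≠ e₀ → 0 ≤ njS A i j (splitInd σ e) := by
    intro e _
    have hcomp := hcompat e e₀
    rw [he₀] at hcomp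
    have : splitInd σ e = (fun x y => if (x ∈ σ e) ≠ (y ∈ σ e) then (1:ℝ) else 0) := rfl
    rw [this]
    exact njS_ind_nonneg A (σ e) i j hi hj hA2 hAB (hnontriv e).1 (hnontriv e).2 hcomp
  refine ⟨P1, P2, ?_⟩
  -- Part 3
  have hδ' : ∀ x y, δT x y = ∑ e, le e * splitInd σ e x y := by
    intro x y
    rw [hδT]
    refine Finset.sum_congr rfl fun e _ => ?_
    by_cases h : (x ∈ σ e) ≠ (y ∈ σ e) <;> simp [splitInd, h]
  rw [njS_linear A i j le (fun e => splitInd σ e) δT hδ']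
  rw [← Finset.add_sum_erase _ (fun e => le e * njS A i j (splitInd σ e))
    (Finset.mem_univ e₀)]
  have hrest : 0 ≤ ∑ e ∈ Finset.univ.erase e₀, le e * njS A i j (splitInd σ e) :=
    Finset.sum_nonneg fun e he =>
      mul_nonneg (hle e).le (P2 e (Finset.mem_erase.mp he).1)
  rw [P1]
  nlinarith [hrest]
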